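/- Let M be a noncompact, locally compact metric space and let φ : M × ℝ → M be a flow. Extend φ to a map φ̂ on the one-point compactification M ∪ {∞} by setting φ̂(∞,t) = ∞ for all t. Then φ̂ is a (continuous) flow on M ∪ {∞}, and φ is dissipative if and only if {∞} is a repeller of φ̂. -/

import Mathlib

open Set Metric Filter Topology Bornology
open OnePoint

section Defs

variable {M : Type*} [TopologicalSpace M]

/-- A (continuous) flow on a topological space. -/
def IsFlow (φ : M → ℝ → M) : Prop :=
  Continuous (fun p : M × ℝ => φ p.1 p.2) ∧
    (∀ x, φ x 0 = x) ∧ ∀ x s t, φ (φ x s) t = φ x (s + t)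

/-- A set `S` is invariant for the flow `φ` if `φ(S,t) = S` for every `t`. -/
def FlowInvariant (φ : M → ℝ → M) (S : Set M) : Prop :=
  ∀ t : ℝ, (fun x => φ x t) '' S = S

/-- The omega-limit set `ω(x) = ⋂_{t>0} cl (φ(x,[t,∞)))`. -/
def omegaLimitSet (φ : M → ℝ → M) (x : M) : Set M :=
  ⋂ t ∈ Ioi (0 : ℝ), closure (φ x '' Ici t)

/-- The negative omega-limit set `ω*(x) = ⋂_{t<0} cl (φ(x,(-∞,t]))`. -/
def negOmegaLimitSet (φ : M → ℝ → M) (x : M) : Set M :=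
  ⋂ t ∈ Iio (0 : ℝ), closure (φ x '' Iic t)

/-- A flow is dissipative if every omega-limit set is nonempty and the closure of the
union of all omega-limit sets is compact. -/
def Dissipative (φ : M → ℝ → M) : Prop :=
  (∀ x, (omegaLimitSet φ x).Nonempty) ∧
    IsCompact (closure (⋃ x, omegaLimitSet φ x))

/-- `K` is stable: every neighborhood `U` of `K` contains a neighborhood `V` of `K`
with `φ(V,[0,∞)) ⊆ U`. -/
def FlowStable (φ : M → ℝ → M) (K : Set M) : Prop :=
  ∀ U ∈ nhdsSet K, ∃ V ∈ nhdsSet K, ∀ x ∈ V, ∀ t : ℝ, 0 ≤ t → φ x t ∈ U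

/-- `K` is negatively stable: every neighborhood `U` of `K` contains a neighborhood `V`
of `K` with `φ(V,(-∞,0]) ⊆ U`. -/
def FlowNegStable (φ : M → ℝ → M) (K : Set M) : Prop :=
  ∀ U ∈ nhdsSet K, ∃ V ∈ nhdsSet K, ∀ x ∈ V, ∀ t : ℝ, t ≤ 0 → φ x t ∈ U

/-- The region of attraction `A(K) = {x : ∅ ≠ ω(x) ⊆ K}`. -/
def attractionRegion (φ : M → ℝ → M) (K : Set M) : Set M :=
  {x | (omegaLimitSet φ x).Nonempty ∧ omegaLimitSet φ x ⊆ K}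

/-- The region of repulsion `R(K) = {x : ∅ ≠ ω*(x) ⊆ K}`. -/
def repulsionRegion (φ : M → ℝ → M) (K : Set M) : Set M :=
  {x | (negOmegaLimitSet φ x).Nonempty ∧ negOmegaLimitSet φ x ⊆ K}

/-- An attractor: a compact invariant stable set which is attracting, i.e. its region of
attraction is a neighborhood of it. -/
def IsAttractor (φ : M → ℝ → M) (K : Set M) : Prop :=
  IsCompact K ∧ FlowInvariant φ K ∧ FlowStable φ K ∧
    attractionRegion φ K ∈ nhdsSet K

/-- A repeller: a compact invariant negatively stable set which is repelling. -/
def IsRepeller (φ : M → ℝ → M) (K : Set M) : Prop :=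
  IsCompact K ∧ FlowInvariant φ K ∧ FlowNegStable φ K ∧
    repulsionRegion φ K ∈ nhdsSet K

/-- A global attractor: a compact invariant stable set whose region of attraction is the
whole space. -/
def IsGlobalAttractor (φ : M → ℝ → M) (K : Set M) : Prop :=
  IsCompact K ∧ FlowInvariant φ K ∧ FlowStable φ K ∧
    attractionRegion φ K = univ

/-- `N` is an isolating neighborhood of `K`: a compact neighborhood of `K` such that `K`
is the maximal invariant set contained in `N`. -/
def IsIsolatingNbhd (φ : M → ℝ → M) (N K : Set M) : Prop :=
  IsCompact N ∧ K ⊆ interior N ∧ FlowInvariant φ K ∧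
    ∀ S : Set M, FlowInvariant φ S → S ⊆ N → S ⊆ K

/-- An isolated invariant set: a compact invariant set having an isolating neighborhood. -/
def IsIsolatedInvariant (φ : M → ℝ → M) (K : Set M) : Prop :=
  IsCompact K ∧ FlowInvariant φ K ∧ ∃ N, IsIsolatingNbhd φ N K

/-- A parametrized family of flows `(φ_λ)_{λ ∈ [0,1]}`: jointly continuous on
`[0,1] × M × ℝ` and each `φ_λ` is a flow. -/
def IsParamFlow (φ : ℝ → M → ℝ → M) : Prop :=
  ContinuousOn (fun p : ℝ × M × ℝ => φ p.1 p.2.1 p.2.2)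
      ((Icc 0 1 : Set ℝ) ×ˢ (univ : Set (M × ℝ))) ∧
    ∀ l ∈ Icc (0 : ℝ) 1, IsFlow (φ l)

/-- `(K_λ)_{λ ∈ J}` is a continuation: each `K_λ` is an isolated invariant set of `φ_λ`
and every isolating neighborhood of `K_{λ₀}` remains an isolating neighborhood of `K_λ`
for `λ` near `λ₀` in `J`. -/
def IsContinuation (φ : ℝ → M → ℝ → M) (J : Set ℝ) (K : ℝ → Set M) : Prop :=
  (∀ l ∈ J, IsIsolatedInvariant (φ l) (K l)) ∧
    ∀ l₀ ∈ J, ∀ N : Set M, IsIsolatingNbhd (φ l₀) N (K l₀) →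
      ∃ δ > 0, ∀ l ∈ J, |l - l₀| < δ → IsIsolatingNbhd (φ l) N (K l)

/-- The family `(φ_λ)` is uniformly dissipative. -/
def UniformlyDissipative (φ : ℝ → M → ℝ → M) : Prop :=
  (∀ l ∈ Icc (0 : ℝ) 1, ∀ x, (omegaLimitSet (φ l) x).Nonempty) ∧
    IsCompact (closure (⋃ l ∈ Icc (0 : ℝ) 1, ⋃ x, omegaLimitSet (φ l) x))

end Defs

section NormedDefs

variable {E : Type*} [NormedAddCommGroup E]

/-- A coercive family of dissipative flows: for every continuation of the global
attractor of `φ₀`, the regions of attraction are bounded for all small `λ > 0`. -/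
def CoerciveFamily (φ : ℝ → E → ℝ → E) : Prop :=
  ∀ lam1 ∈ Ioc (0 : ℝ) 1, ∀ K : ℝ → Set E,
    IsContinuation φ (Icc 0 lam1) K → IsGlobalAttractor (φ 0) (K 0) →
      ∃ lam0, 0 < lam0 ∧ lam0 ≤ lam1 ∧ ∀ l, 0 < l → l < lam0 →
        IsBounded (attractionRegion (φ l) (K l))

/-- A polar family of dissipative flows: it has arbitrarily large bounded trajectories. -/
def PolarFamily (φ : ℝ → E → ℝ → E) : Prop :=
  ∀ L > 0, ∃ lam0 > 0, ∀ l, 0 < l → l < lam0 → l ≤ 1 →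
    ∃ x : E, IsBounded (range (φ l x)) ∧
      ∃ tl < (0 : ℝ), ∀ t < tl, L < ‖φ l x t‖

/-- The set of points whose trajectory tends to infinity in negative time
(the region of repulsion of the point at infinity). -/
def escapeRegion (φ : ℝ → E → ℝ → E) (l : ℝ) : Set E :=
  {x | Tendsto (fun t => ‖φ l x t‖) atBot atTop}

/-- The complementary isolated invariant set
`C_λ = ℝⁿ ∖ (A_λ(K_λ) ∪ R_λ(∞))`. -/
def complementarySet (φ : ℝ → E → ℝ → E) (K : ℝ → Set E) (l : ℝ) : Set E :=
  (attractionRegion (φ l) (K l) ∪ escapeRegion φ l)ᶜ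

end NormedDefs

/-- The extension of a flow on `M` to the one-point compactification `M ∪ {∞}`,
leaving `∞` fixed. -/
def onePointExtension {M : Type*} (φ : M → ℝ → M) (x : OnePoint M) (t : ℝ) :
    OnePoint M :=
  Option.map (fun y => φ y t) x


set_option linter.unusedSectionVars false

namespace DissAux


variable {Y : Type*} [TopologicalSpace Y] {f : Y → ℝ → Y} {x z : Y}

lemma cont_left (hf : IsFlow f) (t : ℝ) : Continuous fun y => f y t :=
  hf.1.comp (continuous_id.prodMk continuous_const)

lemma cont_right (hf : IsFlow f) (y : Y) : Continuous fun t => f y t :=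
  hf.1.comp (continuous_const.prodMk continuous_id)

lemma back (hf : IsFlow f) (y : Y) (t : ℝ) : f (f y t) (-t) = y := by
  rw [hf.2.2, add_neg_cancel, hf.2.1]

lemma omega_mem (hz : z ∈ omegaLimitSet f x) (t : ℝ) : z ∈ closure (f x '' Ici t) := by
  have h := mem_iInter₂.1 hz (max t 1) (by simp : (0:ℝ) < max t 1)
  exact closure_mono (image_mono (Ici_subset_Ici.2 (le_max_left t 1))) h

lemma omega_of (h : ∀ t : ℝ, z ∈ closure (f x '' Ici t)) : z ∈ omegaLimitSet f x :=
  mem_iInter₂.2 fun t _ => h t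

lemma negOmega_mem (hz : z ∈ negOmegaLimitSet f x) (t : ℝ) : z ∈ closure (f x '' Iic t) := by
  have h := mem_iInter₂.1 hz (min t (-1)) (by simp : min t (-1) < 0)
  exact closure_mono (image_mono (Iic_subset_Iic.2 (min_le_left t (-1)))) h

lemma negOmega_of (h : ∀ t : ℝ, z ∈ closure (f x '' Iic t)) : z ∈ negOmegaLimitSet f x :=
  mem_iInter₂.2 fun t _ => h t

lemma omega_isClosed : IsClosed (omegaLimitSet f x) :=
  isClosed_biInter fun _ _ => isClosed_closure

lemma negOmega_isClosed : IsClosed (negOmegaLimitSet f x) :=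
  isClosed_biInter fun _ _ => isClosed_closure

lemma omega_inv (hf : IsFlow f) (hz : z ∈ omegaLimitSet f x) (s : ℝ) :
    f z s ∈ omegaLimitSet f x := by
  refine omega_of fun t => ?_
  have h1 : f z s ∈ closure ((fun w => f w s) '' (f x '' Ici (t - s))) :=
    image_closure_subset_closure_image (cont_left hf s) ⟨z, omega_mem hz (t - s), rfl⟩
  refine closure_mono ?_ h1
  rintro _ ⟨_, ⟨u, hu, rfl⟩, rfl⟩
  exact ⟨u + s, mem_Ici.2 (by have := mem_Ici.1 hu; linarith), (hf.2.2 x u s).symm ▸ rfl⟩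

lemma negOmega_inv (hf : IsFlow f) (hz : z ∈ negOmegaLimitSet f x) (s : ℝ) :
    f z s ∈ negOmegaLimitSet f x := by
  refine negOmega_of fun t => ?_
  have h1 : f z s ∈ closure ((fun w => f w s) '' (f x '' Iic (t - s))) :=
    image_closure_subset_closure_image (cont_left hf s) ⟨z, negOmega_mem hz (t - s), rfl⟩
  refine closure_mono ?_ h1
  rintro _ ⟨_, ⟨u, hu, rfl⟩, rfl⟩
  exact ⟨u + s, mem_Iic.2 (by have := mem_Iic.1 hu; linarith), (hf.2.2 x u s).symm ▸ rfl⟩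

lemma omega_nonempty_of (h0 : IsCompact (closure (f x '' Ici (0:ℝ)))) :
    (omegaLimitSet f x).Nonempty := by
  set Z : ℕ → Set Y := fun n => closure (f x '' Ici (n : ℝ)) with hZ
  have hmono : ∀ n : ℕ, Z (n + 1) ⊆ Z n := fun n =>
    closure_mono (image_mono (Ici_subset_Ici.2 (by exact_mod_cast Nat.le_succ n)))
  have hne : ∀ n, (Z n).Nonempty := fun n =>
    (Nonempty.image _ ⟨(n:ℝ), le_refl _⟩).closure
  have h0' : IsCompact (Z 0) := by simpa [hZ] using h0
  have key : (⋂ n, Z n).Nonempty :=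
    IsCompact.nonempty_iInter_of_sequence_nonempty_isCompact_isClosed Z hmono hne h0'
      (fun n => isClosed_closure)
  obtain ⟨z, hz⟩ := key
  refine ⟨z, omega_of fun t => ?_⟩
  obtain ⟨n, hn⟩ := exists_nat_ge t
  exact closure_mono (image_mono (Ici_subset_Ici.2 hn)) (mem_iInter.1 hz n)

lemma negOmega_nonempty_of (h0 : IsCompact (closure (f x '' Iic (0:ℝ)))) :
    (negOmegaLimitSet f x).Nonempty := by
  set Z : ℕ → Set Y := fun n => closure (f x '' Iic (-(n : ℝ))) with hZ
  have hmono : ∀ n : ℕ, Z (n + 1) ⊆ Z n := fun n =>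
    closure_mono (image_mono (Iic_subset_Iic.2 (by push_cast; linarith)))
  have hne : ∀ n, (Z n).Nonempty := fun n =>
    (Nonempty.image _ ⟨-(n:ℝ), mem_Iic.2 (le_refl _)⟩).closure
  have h0' : IsCompact (Z 0) := by simpa [hZ] using h0
  have key : (⋂ n, Z n).Nonempty :=
    IsCompact.nonempty_iInter_of_sequence_nonempty_isCompact_isClosed Z hmono hne h0'
      (fun n => isClosed_closure)
  obtain ⟨z, hz⟩ := key
  refine ⟨z, negOmega_of fun t => ?_⟩
  obtain ⟨n, hn⟩ := exists_nat_ge (-t)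
  exact closure_mono (image_mono (Iic_subset_Iic.2 (by linarith))) (mem_iInter.1 hz n)



/-- Key lemma: for a pointwise dissipative flow on a locally compact metric space,
the forward orbit of every compact set is contained in a compact set. -/
lemma orbit_bounded {M : Type*} [MetricSpace M] [LocallyCompactSpace M]
    {φ : M → ℝ → M} (hφ : IsFlow φ)
    (hne : ∀ y, (omegaLimitSet φ y).Nonempty)
    (hA : IsCompact (closure (⋃ y, omegaLimitSet φ y)))
    {C : Set M} (hC : IsCompact C) :
    ∃ D : Set M, IsCompact D ∧ ∀ x ∈ C, ∀ t : ℝ, 0 ≤ t → φ x t ∈ D := by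
  set A := closure (⋃ y, omegaLimitSet φ y) with hAdef
  obtain ⟨W, hWc, hWi⟩ := exists_compact_superset (hA.union hC)
  by_contra hcon
  push_neg at hcon
  have hsel : ∀ n : ℕ, ∃ x ∈ W, ∃ t : ℝ, 0 ≤ t ∧
      φ x t ∉ (fun p : M × ℝ => φ p.1 p.2) '' (W ×ˢ Icc (0:ℝ) n) := by
    intro n
    obtain ⟨x, hxC, t, ht, hnot⟩ :=
      hcon _ ((hWc.prod isCompact_Icc).image hφ.1)
    exact ⟨x, interior_subset (hWi (Or.inr hxC)), t, ht, hnot⟩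
  choose x hxW t ht0 hnot using hsel
  have hScpt : ∀ n : ℕ, IsCompact (Icc (0:ℝ) (t n) ∩ (fun s => φ (x n) s) ⁻¹' W) :=
    fun n => isCompact_Icc.inter_right (hWc.isClosed.preimage (cont_right hφ (x n)))
  have hSne : ∀ n : ℕ, (Icc (0:ℝ) (t n) ∩ (fun s => φ (x n) s) ⁻¹' W).Nonempty := by
    intro n
    refine ⟨0, ⟨le_refl 0, ht0 n⟩, ?_⟩
    show φ (x n) 0 ∈ W
    rw [hφ.2.1]; exact hxW n
  set u : ℕ → ℝ := fun n => sSup (Icc (0:ℝ) (t n) ∩ (fun s => φ (x n) s) ⁻¹' W) with hu_def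
  have hu : ∀ n, u n ∈ Icc (0:ℝ) (t n) ∩ (fun s => φ (x n) s) ⁻¹' W :=
    fun n => (hScpt n).sSup_mem (hSne n)
  have hle : ∀ n, ∀ s ∈ Icc (0:ℝ) (t n) ∩ (fun s => φ (x n) s) ⁻¹' W, s ≤ u n :=
    fun n s hs => le_csSup (hScpt n).bddAbove hs
  have claim1 : ∀ n : ℕ, ∀ s : ℝ, 0 < s → u n + s ≤ t n → φ (φ (x n) (u n)) s ∉ W := by
    intro n s hs hst hmem
    rw [hφ.2.2] at hmem
    have h1 : u n + s ≤ u n := hle n _ ⟨⟨by linarith [(hu n).1.1], hst⟩, hmem⟩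
    linarith
  have claim2 : ∀ n : ℕ, (n : ℝ) < t n - u n := by
    intro n
    by_contra h
    push_neg at h
    apply hnot n
    refine ⟨(φ (x n) (u n), t n - u n),
      mem_prod.2 ⟨(hu n).2, mem_Icc.2 ⟨sub_nonneg.2 (hu n).1.2, h⟩⟩, ?_⟩
    show φ (φ (x n) (u n)) (t n - u n) = φ (x n) (t n)
    rw [hφ.2.2, show u n + (t n - u n) = t n from by ring]
  obtain ⟨ylim, hylimW, σ, hσ, htend⟩ := hWc.tendsto_subseq (fun n => (hu n).2)
  have hstay : ∀ s : ℝ, 0 < s → φ ylim s ∉ interior W := by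
    intro s hs hmem
    have h1 : Tendsto (fun n => φ (φ (x (σ n)) (u (σ n))) s) atTop (𝓝 (φ ylim s)) :=
      ((cont_left hφ s).continuousAt.tendsto).comp htend
    have h2 : ∀ᶠ n in atTop, φ (φ (x (σ n)) (u (σ n))) s ∈ interior W :=
      h1.eventually (isOpen_interior.eventually_mem hmem)
    obtain ⟨m, hm⟩ := exists_nat_ge s
    obtain ⟨N, hN⟩ := eventually_atTop.1 h2
    set n := max N m with hn
    have hin : φ (φ (x (σ n)) (u (σ n))) s ∈ W := interior_subset (hN n (le_max_left _ _))
    refine claim1 (σ n) s hs ?_ hin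
    have h3 : (m : ℝ) ≤ σ n := by
      exact_mod_cast Nat.cast_le.2 ((le_max_right N m).trans (hσ.le_apply))
    linarith [claim2 (σ n), hm]
  obtain ⟨z, hz⟩ := hne ylim
  have hzA : z ∈ interior W :=
    hWi (Or.inl (subset_closure (mem_iUnion.2 ⟨ylim, hz⟩)))
  have h3 := omega_mem hz 1
  rw [_root_.mem_closure_iff] at h3
  obtain ⟨w, hwint, s, hs1, hws⟩ := h3 (interior W) isOpen_interior hzA
  exact hstay s (by linarith [mem_Ici.1 hs1]) (hws ▸ hwint)

section

variable {M : Type*} [TopologicalSpace M] [T2Space M] [LocallyCompactSpace M]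

lemma coe_mem_closure_image_iff {S : Set M} {z : M} :
    (z : OnePoint M) ∈ closure ((↑) '' S) ↔ z ∈ closure S := by
  constructor
  · intro h
    rw [_root_.mem_closure_iff]
    intro o ho hzo
    have h2 := _root_.mem_closure_iff.1 h ((↑) '' o) (isOpenMap_coe o ho) ⟨z, hzo, rfl⟩
    obtain ⟨w, ⟨a, ha, haw⟩, b, hb, hbw⟩ := h2
    exact ⟨b, by rw [coe_injective (hbw.trans haw.symm)]; exact ha, hb⟩
  · intro h
    exact image_closure_subset_closure_image continuous_coe ⟨z, h, rfl⟩

lemma mem_nhds_infty_iff {U : Set (OnePoint M)} (h : U ∈ 𝓝 (∞ : OnePoint M)) :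
    ∃ K : Set M, IsCompact K ∧ (∀ z : M, z ∉ K → (z : OnePoint M) ∈ U) ∧ ∞ ∈ U := by
  obtain ⟨s, ⟨hsc, hsk⟩, hsub⟩ := (hasBasis_nhds_infty (X := M)).mem_iff.1 h
  exact ⟨s, hsk, fun z hz => hsub (Or.inl ⟨z, hz, rfl⟩), hsub (Or.inr rfl)⟩

lemma compl_image_mem_nhds_infty {D : Set M} (hD : IsCompact D) :
    ((↑) '' D : Set (OnePoint M))ᶜ ∈ 𝓝 (∞ : OnePoint M) :=
  (isOpen_compl_iff.2 (isClosed_image_coe.2 ⟨hD.isClosed, hD⟩)).mem_nhds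
    (fun h => infty_notMem_image_coe h)

end

/-- The one-point extension of a flow is a flow. -/
lemma ext_isFlow {M : Type*} [TopologicalSpace M] [T2Space M] [LocallyCompactSpace M]
    {φ : M → ℝ → M} (hφ : IsFlow φ) : IsFlow (onePointExtension φ) := by
  refine ⟨?_, ?_, ?_⟩
  · rw [continuous_iff_continuousAt]
    rintro ⟨v, t⟩
    induction v using OnePoint.rec with
    | coe a =>
      have key : Tendsto (fun p : M × ℝ => ((φ p.1 p.2 : M) : OnePoint M))
          (𝓝 (a, t)) (𝓝 (↑(φ a t))) :=
        (continuous_coe.comp hφ.1).continuousAt.tendsto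
      have : ContinuousAt (fun p : OnePoint M × ℝ => onePointExtension φ p.1 p.2) (↑a, t) := by
        rw [ContinuousAt]
        show Tendsto _ (𝓝 ((↑a : OnePoint M), t)) (𝓝 ((φ a t : M) : OnePoint M))
        rw [nhds_prod_eq, nhds_coe_eq, ← Filter.map_id (f := 𝓝 t), prod_map_map_eq,
          tendsto_map'_iff]
        have heq : ((fun p : OnePoint M × ℝ => onePointExtension φ p.1 p.2) ∘
            fun p : M × ℝ => ((p.1 : OnePoint M), id p.2)) =
            fun p : M × ℝ => ((φ p.1 p.2 : M) : OnePoint M) := rfl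
        rw [heq, ← nhds_prod_eq]
        exact key
      exact this
    | infty =>
      rw [ContinuousAt]
      show Tendsto _ (𝓝 ((∞ : OnePoint M), t)) (𝓝 ∞)
      intro U hU
      obtain ⟨K, hK, hKU, hinfU⟩ := mem_nhds_infty_iff hU
      have hK' : IsCompact ((fun p : M × ℝ => φ p.1 p.2) '' (K ×ˢ Icc (-t-1) (-t+1))) :=
        (hK.prod isCompact_Icc).image hφ.1
      have hmem : (((↑) '' ((fun p : M × ℝ => φ p.1 p.2) '' (K ×ˢ Icc (-t-1) (-t+1))) :
          Set (OnePoint M))ᶜ ×ˢ Ioo (t-1) (t+1)) ∈ 𝓝 ((∞ : OnePoint M), t) :=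
        prod_mem_nhds (compl_image_mem_nhds_infty hK')
          (Ioo_mem_nhds (by linarith) (by linarith))
      rw [mem_map]
      refine mem_of_superset hmem ?_
      rintro ⟨v, s⟩ ⟨hv, hs⟩
      induction v using OnePoint.rec with
      | infty => exact hinfU
      | coe a =>
        show (↑(φ a s) : OnePoint M) ∈ U
        refine hKU _ fun hmemK => hv ?_
        have hs' : t - 1 < s ∧ s < t + 1 := hs
        refine ⟨a, ⟨(φ a s, -s), mem_prod.2 ⟨hmemK, mem_Icc.2
          ⟨show -t-1 ≤ -s by linarith [hs'.2], show -s ≤ -t+1 by linarith [hs'.1]⟩⟩,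
          back hφ a s⟩, rfl⟩
  · intro v
    induction v using OnePoint.rec with
    | infty => rfl
    | coe a => show ((φ a 0 : M) : OnePoint M) = ↑a; rw [hφ.2.1]
  · intro v s r
    induction v using OnePoint.rec with
    | infty => rfl
    | coe a => show ((φ (φ a s) r : M) : OnePoint M) = ↑(φ a (s+r)); rw [hφ.2.2]


lemma ext_coe_image {M : Type*} (φ : M → ℝ → M) (x : M) (T : Set ℝ) :
    onePointExtension φ (↑x) '' T = (↑) '' ((fun s => φ x s) '' T) := by
  rw [← image_comp]; rfl

lemma coe_mem_negOmega_iff {M : Type*} [MetricSpace M] [LocallyCompactSpace M]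
    {φ : M → ℝ → M} {x z : M} :
    (z : OnePoint M) ∈ negOmegaLimitSet (onePointExtension φ) ↑x ↔
      z ∈ negOmegaLimitSet φ x := by
  constructor
  · intro h
    refine negOmega_of fun t => ?_
    have h1 := negOmega_mem h t
    rw [ext_coe_image] at h1
    exact coe_mem_closure_image_iff.1 h1
  · intro h
    refine negOmega_of fun t => ?_
    rw [ext_coe_image]
    exact coe_mem_closure_image_iff.2 (negOmega_mem h t)

end DissAux

/-- The extension of a flow on a noncompact locally compact metric
space `M` to the one-point compactification leaving `∞` fixed is a continuous flow,
and the original flow is dissipative if and only if `{∞}` is a repeller of the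
extended flow. -/
theorem onePointExtension_isFlow_and_dissipative_iff_infty_isRepeller
    {M : Type*} [MetricSpace M] [LocallyCompactSpace M] [NoncompactSpace M]
    (φ : M → ℝ → M) (hφ : IsFlow φ) :
    IsFlow (onePointExtension φ) ∧
      (Dissipative φ ↔
        IsRepeller (onePointExtension φ) ({OnePoint.infty} : Set (OnePoint M))) := by
  have hψ : IsFlow (onePointExtension φ) := DissAux.ext_isFlow hφ
  refine ⟨hψ, ?_, ?_⟩
  · -- Dissipative → IsRepeller
    rintro ⟨hne, hA⟩
    have hsubA : ∀ y, omegaLimitSet φ y ⊆ closure (⋃ w, omegaLimitSet φ w) :=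
      fun y => (subset_iUnion _ y).trans subset_closure
    obtain ⟨W₀, hW₀c, hW₀i⟩ := exists_compact_superset hA
    refine ⟨isCompact_singleton, ?_, ?_, ?_⟩
    · intro s; rw [Set.image_singleton]; rfl
    · -- negative stability of {∞}
      intro U hU
      rw [nhdsSet_singleton] at hU
      obtain ⟨K, hK, hKU, hinfU⟩ := DissAux.mem_nhds_infty_iff hU
      obtain ⟨D, hD, hDorb⟩ := DissAux.orbit_bounded hφ hne hA hK
      refine ⟨((↑) '' D)ᶜ,
        by rw [nhdsSet_singleton]; exact DissAux.compl_image_mem_nhds_infty hD, ?_⟩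
      intro v hv s hs
      induction v using OnePoint.rec with
      | infty => exact hinfU
      | coe a =>
        show (↑(φ a s) : OnePoint M) ∈ U
        refine hKU _ fun hmemK => hv ?_
        have h2 : φ (φ a s) (-s) ∈ D := hDorb _ hmemK (-s) (by linarith)
        rw [DissAux.back hφ] at h2
        exact ⟨a, h2, rfl⟩
    · -- the repulsion region is a neighborhood of {∞}
      rw [nhdsSet_singleton]
      obtain ⟨D, hD, hDorb⟩ := DissAux.orbit_bounded hφ hne hA hW₀c
      refine mem_of_superset (DissAux.compl_image_mem_nhds_infty hD) ?_
      intro v hv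
      induction v using OnePoint.rec with
      | infty =>
        refine ⟨⟨∞, DissAux.negOmega_of fun t => subset_closure
          ⟨t, mem_Iic.2 le_rfl, rfl⟩⟩, ?_⟩
        intro w hw
        have h1 := DissAux.negOmega_mem hw (-1)
        have h2 : closure (onePointExtension φ ∞ '' Iic (-1:ℝ)) ⊆
            ({OnePoint.infty} : Set (OnePoint M)) :=
          closure_minimal (by rintro _ ⟨u, -, rfl⟩; rfl) isClosed_singleton
        exact h2 h1
      | coe a =>
        refine ⟨DissAux.negOmega_nonempty_of isClosed_closure.isCompact, ?_⟩
        intro w hw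
        induction w using OnePoint.rec with
        | infty => rfl
        | coe z =>
          exfalso
          have hzneg : z ∈ negOmegaLimitSet φ a := DissAux.coe_mem_negOmega_iff.1 hw
          obtain ⟨z', hz'⟩ := hne z
          have hz'neg : z' ∈ negOmegaLimitSet φ a := by
            have h1 := DissAux.omega_mem hz' 1
            have h2 : closure (φ z '' Ici (1:ℝ)) ⊆ negOmegaLimitSet φ a := by
              refine closure_minimal ?_ DissAux.negOmega_isClosed
              rintro _ ⟨u, -, rfl⟩
              exact DissAux.negOmega_inv hφ hzneg u
            exact h2 h1
          have hz'W : z' ∈ interior W₀ := hW₀i (hsubA z hz')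
          have h3 := DissAux.negOmega_mem hz'neg (-1)
          rw [_root_.mem_closure_iff] at h3
          obtain ⟨w', hw'int, u, hu, hwu⟩ := h3 (interior W₀) isOpen_interior hz'W
          have h4 : φ (φ a u) (-u) ∈ D := by
            refine hDorb _ (interior_subset (hwu ▸ hw'int)) (-u) ?_
            have := mem_Iic.1 hu; linarith
          rw [DissAux.back hφ] at h4
          exact hv ⟨a, h4, rfl⟩
  · -- IsRepeller → Dissipative
    rintro ⟨-, -, hstab, hreg⟩
    rw [nhdsSet_singleton] at hreg
    obtain ⟨K, hK, hKrep, -⟩ := DissAux.mem_nhds_infty_iff hreg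
    have horb : ∀ x : M, ∃ C : Set M, IsCompact C ∧ ∀ t : ℝ, 0 ≤ t → φ x t ∈ C := by
      intro x
      have hU : ({((x : OnePoint M))}ᶜ : Set (OnePoint M)) ∈
          nhdsSet ({OnePoint.infty} : Set (OnePoint M)) := by
        rw [nhdsSet_singleton]
        exact isOpen_compl_singleton.mem_nhds
          (mem_compl_singleton_iff.2 (OnePoint.infty_ne_coe x))
      obtain ⟨V, hV, hVprop⟩ := hstab _ hU
      rw [nhdsSet_singleton] at hV
      obtain ⟨C, hC, hCV, -⟩ := DissAux.mem_nhds_infty_iff hV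
      refine ⟨C, hC, fun t ht => ?_⟩
      by_contra hmem
      have h5 := hVprop _ (hCV _ hmem) (-t) (by linarith)
      have heq : onePointExtension φ (↑(φ x t)) (-t) = ((x : OnePoint M)) := by
        show ((φ (φ x t) (-t) : M) : OnePoint M) = _
        rw [DissAux.back hφ]
      rw [heq] at h5
      exact h5 rfl
    have hωne : ∀ x, (omegaLimitSet φ x).Nonempty := by
      intro x
      obtain ⟨C, hC, hCorb⟩ := horb x
      refine DissAux.omega_nonempty_of (hC.of_isClosed_subset isClosed_closure ?_)
      exact closure_minimal (by rintro _ ⟨u, hu, rfl⟩; exact hCorb u hu) hC.isClosed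
    refine ⟨hωne, hK.of_isClosed_subset isClosed_closure (closure_minimal ?_ hK.isClosed)⟩
    intro z hz
    rw [mem_iUnion] at hz
    obtain ⟨x, hzx⟩ := hz
    by_contra hzK
    have hrep2 := hKrep z hzK
    obtain ⟨C, hC, hCorb⟩ := horb x
    have hωsub : omegaLimitSet φ x ⊆ C := by
      intro w hw
      exact (closure_minimal (by rintro _ ⟨u, hu, rfl⟩; exact hCorb u hu) hC.isClosed)
        (DissAux.omega_mem hw 0)
    have hωcpt : IsCompact (omegaLimitSet φ x) :=
      hC.of_isClosed_subset DissAux.omega_isClosed hωsub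
    have hneg : (negOmegaLimitSet φ z).Nonempty := by
      refine DissAux.negOmega_nonempty_of (hωcpt.of_isClosed_subset isClosed_closure ?_)
      refine closure_minimal ?_ DissAux.omega_isClosed
      rintro _ ⟨u, -, rfl⟩
      exact DissAux.omega_inv hφ hzx u
    obtain ⟨w, hw⟩ := hneg
    have hwmem : (w : OnePoint M) ∈ negOmegaLimitSet (onePointExtension φ) ↑z :=
      DissAux.coe_mem_negOmega_iff.2 hw
    have hw2 := hrep2.2 hwmem
    exact OnePoint.coe_ne_infty w (mem_singleton_iff.1 hw2)
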